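/- Let T be a binary decision tree over ℝ^d with classes {1,…,c}. Let (X, λ_X) and (X̃, λ_X̃) be finite labeled datasets in ℝ^d with class labels in {1,…,c}, let γ be a positive natural number and ε ≥ 0, and let r : X → X̃ be a map such that ‖x − r(x)‖_∞ ≤ ε and λ_X(x) = λ_X̃(r(x)) for all x ∈ X, and such that every fiber of r has cardinality exactly γ. Assume that for every x̃ ∈ X̃ the margin of x̃ at T is strictly greater than ε. Then for every leaf ℓ of T and every class k ∈ {1,…,c}: the number N_ℓ of points of X whose evaluation path through T ends at ℓ equals γ times the corresponding number Ñ_ℓ for X̃, and the number N_{ℓ,k} of such points of X with label k equals γ times the corresponding number Ñ_{ℓ,k} for X̃. -/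

import Mathlib

open scoped Classical

/-- A binary decision tree over `ℝ^d` with classes `{1,…,c}` (encoded as `Fin c`):
either a leaf labeled by a class, or an internal node carrying a feature index,
a threshold, and two subtrees. -/
inductive DTree (d c : ℕ) : Type where
  | leaf (k : Fin c) : DTree d c
  | node (j : Fin d) (t : ℝ) (L R : DTree d c) : DTree d c

namespace DTree

variable {d c : ℕ}

/-- Evaluation of a decision tree at a point `x : ℝ^d`. -/
noncomputable def eval : DTree d c → (Fin d → ℝ) → Fin c
  | leaf k, _ => k
  | node j t L R, x => if x j < t then L.eval x else R.eval x

/-- The path of `x` through the tree: the sequence of internal nodes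
(feature index, threshold) visited during evaluation. -/
noncomputable def path : DTree d c → (Fin d → ℝ) → List (Fin d × ℝ)
  | leaf _, _ => []
  | node j t L R, x => (j, t) :: (if x j < t then L.path x else R.path x)

/-- The position (sequence of left/right choices) of the leaf reached by `x`. -/
noncomputable def leafPos : DTree d c → (Fin d → ℝ) → List Bool
  | leaf _, _ => []
  | node j t L R, x =>
      if x j < t then false :: L.leafPos x else true :: R.leafPos x

/-- The margin of `x̃` at the tree: the minimum of `|t - x̃ j|` over internal
nodes `(j, t)` on the path of `x̃`, and `+∞` for a single leaf. -/
noncomputable def margin : DTree d c → (Fin d → ℝ) → EReal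
  | leaf _, _ => ⊤
  | node j t L R, x =>
      min (↑|t - x j|) (if x j < t then L.margin x else R.margin x)

/-- The set of leaves of the tree, identified with root-to-leaf positions. -/
def leaves : DTree d c → Finset (List Bool)
  | leaf _ => {[]}
  | node _ _ L R => (L.leaves.image (false :: ·)) ∪ (R.leaves.image (true :: ·))

/-- The class label of the leaf at a given root-to-leaf position, if it exists. -/
def labelAt : DTree d c → List Bool → Option (Fin c)
  | leaf k, [] => some k
  | node _ _ L _, false :: p => L.labelAt p
  | node _ _ _ R, true :: p => R.labelAt p
  | _, _ => none

end DTree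

lemma DTree.leafPos_eq_of_close {d c : ℕ} (T : DTree d c) (ε : ℝ)
    (x x' : Fin d → ℝ) (hclose : ‖x - x'‖ ≤ ε)
    (hmargin : (ε : EReal) < T.margin x') : T.leafPos x = T.leafPos x' := by
  induction T with
  | leaf k => rfl
  | node j t L R hL hR =>
    have hmin := hmargin
    simp only [DTree.margin, lt_min_iff] at hmin
    obtain ⟨h1, h2⟩ := hmin
    have h1' : ε < |t - x' j| := by exact_mod_cast h1
    have hj : |x j - x' j| ≤ ε := by
      calc |x j - x' j| = ‖(x - x') j‖ := by simp [Real.norm_eq_abs]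
        _ ≤ ‖x - x'‖ := norm_le_pi_norm _ j
        _ ≤ ε := hclose
    have hiff : (x j < t) ↔ (x' j < t) := by
      constructor
      · intro h
        by_contra hn
        push_neg at hn
        have : |t - x' j| = x' j - t := by rw [abs_sub_comm]; exact abs_of_nonneg (by linarith)
        have hle : x' j - x j ≤ ε := le_trans (le_abs_self _) (by rwa [abs_sub_comm] at hj)
        linarith [this ▸ h1']
      · intro h
        by_contra hn
        push_neg at hn
        have : |t - x' j| = t - x' j := abs_of_nonneg (by linarith)
        have hle : x j - x' j ≤ ε := le_trans (le_abs_self _) hj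
        linarith [this ▸ h1']
    by_cases h : x' j < t
    · have hx : x j < t := hiff.mpr h
      simp only [DTree.leafPos, if_pos h, if_pos hx]
      rw [hL (by simpa [if_pos h] using h2)]
    · have hx : ¬ x j < t := fun hh => h (hiff.mp hh)
      simp only [DTree.leafPos, if_neg h, if_neg hx]
      rw [hR (by simpa [if_neg h] using h2)]

lemma count_aux {d : ℕ} (X X' : Finset (Fin d → ℝ)) (γ : ℕ)
    (r : (Fin d → ℝ) → (Fin d → ℝ)) (hr : ∀ x ∈ X, r x ∈ X')
    (hfib : ∀ x' ∈ X', (X.filter (fun x => r x = x')).card = γ)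
    (P Q : (Fin d → ℝ) → Prop) [DecidablePred P] [DecidablePred Q]
    (hP : ∀ x ∈ X, (P x ↔ Q (r x))) :
    (X.filter P).card = γ * (X'.filter Q).card := by
  classical
  rw [Finset.card_eq_sum_card_fiberwise
    (f := r) (t := X'.filter Q)
    (fun x hx => by
      simp only [Finset.mem_coe, Finset.mem_filter] at hx ⊢
      exact ⟨hr x hx.1, (hP x hx.1).mp hx.2⟩)]
  have : ∀ x' ∈ X'.filter Q,
      ((X.filter P).filter (fun x => r x = x')).card = γ := by
    intro x' hx'
    simp only [Finset.mem_filter] at hx'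
    rw [Finset.filter_filter]
    have : (X.filter (fun x => P x ∧ r x = x')) = X.filter (fun x => r x = x') := by
      apply Finset.filter_congr
      intro x hx
      constructor
      · exact fun h => h.2
      · exact fun h => ⟨(hP x hx).mpr (h ▸ hx'.2), h⟩
    rw [this, hfib x' hx'.1]
  rw [Finset.sum_congr rfl this, Finset.sum_const, smul_eq_mul, mul_comm]

/-- Let `(X, labX)` and `(X', labX')` be finite labeled datasets in `ℝ^d`, let
`r` map each `x ∈ X` to a representative `r x ∈ X'` with `‖x − r x‖_∞ ≤ ε` and
the same label, with all fibers of `r` of cardinality exactly `γ > 0`. If the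
margin of every `x' ∈ X'` at the tree `T` exceeds `ε`, then for every leaf `ℓ`
of `T` and every class `k`, the number of points of `X` whose evaluation path
ends at `ℓ` is `γ` times the corresponding number for `X'`, and likewise for
the number of such points with label `k`. -/
theorem DTree.leaf_counts_of_balanced_representative {d c : ℕ} (T : DTree d c)
    (X X' : Finset (Fin d → ℝ)) (labX labX' : (Fin d → ℝ) → Fin c)
    (γ : ℕ) (hγ : 0 < γ) (ε : ℝ) (hε : 0 ≤ ε)
    (r : (Fin d → ℝ) → (Fin d → ℝ)) (hr : ∀ x ∈ X, r x ∈ X')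
    (hclose : ∀ x ∈ X, ‖x - r x‖ ≤ ε)
    (hlab : ∀ x ∈ X, labX x = labX' (r x))
    (hfib : ∀ x' ∈ X', (X.filter (fun x => r x = x')).card = γ)
    (hmargin : ∀ x' ∈ X', (ε : EReal) < T.margin x') :
    ∀ ℓ ∈ T.leaves, ∀ k : Fin c,
      (X.filter (fun x => T.leafPos x = ℓ)).card
          = γ * (X'.filter (fun x => T.leafPos x = ℓ)).card ∧
        (X.filter (fun x => T.leafPos x = ℓ ∧ labX x = k)).card
          = γ * (X'.filter (fun x => T.leafPos x = ℓ ∧ labX' x = k)).card := by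
  intro ℓ hℓ k
  have key : ∀ x ∈ X, T.leafPos x = T.leafPos (r x) := fun x hx =>
    T.leafPos_eq_of_close ε x (r x) (hclose x hx) (hmargin (r x) (hr x hx))
  exact ⟨count_aux X X' γ r hr hfib (fun x => T.leafPos x = ℓ) _
      (fun x hx => by simp only [key x hx]),
    count_aux X X' γ r hr hfib (fun x => T.leafPos x = ℓ ∧ labX x = k)
      (fun x => T.leafPos x = ℓ ∧ labX' x = k)
      (fun x hx => by simp only [key x hx, hlab x hx])⟩
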